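/- Let ι > 0, κ ≥ 0, ι₁ = √κ · ι, ι₂ = √(κ+1) · ι, and let k < ι₂ - ι₁, v = 2ι²/(ι₂ - ι₁ - k). Then ∫_k^{ι₂-ι₁} (e^x - e^k) · e^{ι₁ + κ(x - (ι₂-ι₁))} · (1/(2√π)) ι · exp(-ι²/(4(ι₂-ι₁-x))) / (ι₂-ι₁-x)^{3/2} dx = e^{ι₂} D(v, 2ι₂) - e^{k+ι₁} D(v, 2ι₁), where D(v,k) = e^{-k/2} Φ(-(-k+v/2)/√v) + e^{k/2} Φ((-k-v/2)/√v). -/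

import Mathlib

open MeasureTheory

/-- Standard normal density. -/
noncomputable def gaussPDF (x : ℝ) : ℝ := Real.exp (-x ^ 2 / 2) / Real.sqrt (2 * Real.pi)

/-- Standard normal CDF. -/
noncomputable def gaussCDF (x : ℝ) : ℝ := ∫ t in Set.Iic x, gaussPDF t

/-- Symmetrized Black-Scholes function
`D(v,k) = e^{-k/2}Φ(-d₊) + e^{k/2}Φ(d₋)`, `d± = (-k ± v/2)/√v`. -/
noncomputable def Dsym (v k : ℝ) : ℝ :=
  Real.exp (-k / 2) * gaussCDF (-((-k + v / 2) / Real.sqrt v)) +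
    Real.exp (k / 2) * gaussCDF ((-k - v / 2) / Real.sqrt v)

section Aux

open Filter Set Topology

lemma sqrt2pi_pos : 0 < Real.sqrt (2 * Real.pi) :=
  Real.sqrt_pos.2 (by positivity)

lemma gaussPDF_nonneg (x : ℝ) : 0 ≤ gaussPDF x := by
  unfold gaussPDF; positivity

lemma gaussPDF_continuous : Continuous gaussPDF := by
  unfold gaussPDF; fun_prop

lemma gaussPDF_integrable : Integrable gaussPDF := by
  have h : gaussPDF = fun x => Real.exp (-(1/2 : ℝ) * x ^ 2) * (Real.sqrt (2 * Real.pi))⁻¹ := by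
    funext x
    unfold gaussPDF
    rw [div_eq_mul_inv]
    congr 2
    ring
  rw [h]
  exact (integrable_exp_neg_mul_sq (by norm_num)).mul_const _

lemma gaussCDF_hasDerivAt (x : ℝ) : HasDerivAt gaussCDF (gaussPDF x) x := by
  have heq : gaussCDF = fun y => gaussCDF 0 + ∫ t in (0:ℝ)..y, gaussPDF t := by
    funext y
    have h := intervalIntegral.integral_Iic_sub_Iic
      (gaussPDF_integrable.integrableOn (s := Set.Iic 0))
      (gaussPDF_integrable.integrableOn (s := Set.Iic y))
    unfold gaussCDF
    linarith [h]
  rw [heq]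
  refine HasDerivAt.const_add _ ?_
  exact intervalIntegral.integral_hasDerivAt_right
    gaussPDF_integrable.intervalIntegrable
    (gaussPDF_continuous.stronglyMeasurable.stronglyMeasurableAtFilter)
    gaussPDF_continuous.continuousAt

lemma gaussCDF_tendsto_atBot : Tendsto gaussCDF atBot (𝓝 0) := by
  have h0 : ∀ x, 0 ≤ gaussCDF x := fun x =>
    setIntegral_nonneg measurableSet_Iic fun t _ => gaussPDF_nonneg t
  have hb : ∀ x ≤ (-2:ℝ), gaussCDF x ≤ Real.exp x / Real.sqrt (2 * Real.pi) := by
    intro x hx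
    have hmono : gaussCDF x ≤ ∫ t in Set.Iic x, Real.exp t / Real.sqrt (2 * Real.pi) := by
      refine setIntegral_mono_on gaussPDF_integrable.integrableOn
        ((integrableOn_exp_Iic x).div_const _) measurableSet_Iic ?_
      intro t ht
      unfold gaussPDF
      have ht' : t ≤ -2 := le_trans ht hx
      have h2 : -t ^ 2 / 2 ≤ t := by nlinarith
      gcongr
    have heq : ∫ t in Set.Iic x, Real.exp t / Real.sqrt (2 * Real.pi)
        = Real.exp x / Real.sqrt (2 * Real.pi) := by
      rw [integral_div, integral_exp_Iic]
    linarith [hmono]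
  have hlim : Tendsto (fun x => Real.exp x / Real.sqrt (2 * Real.pi)) atBot (𝓝 0) := by
    simpa using Real.tendsto_exp_atBot.div_const (Real.sqrt (2 * Real.pi))
  exact squeeze_zero' (Eventually.of_forall h0) (eventually_atBot.2 ⟨-2, hb⟩) hlim

/-- Inverse-Gaussian-type integrand. -/
noncomputable def ig (a μ t : ℝ) : ℝ :=
  a / Real.sqrt (2 * Real.pi) * Real.exp (-(a - μ * t) ^ 2 / (2 * t)) / t ^ ((3:ℝ)/2)

/-- First-passage CDF. -/
noncomputable def Gfun (a μ t : ℝ) : ℝ :=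
  gaussCDF (μ * Real.sqrt t - a / Real.sqrt t) +
    Real.exp (2 * a * μ) * gaussCDF (-(μ * Real.sqrt t) - a / Real.sqrt t)

lemma rpow_three_halves {t : ℝ} (ht : 0 < t) : t ^ ((3:ℝ)/2) = t * Real.sqrt t := by
  rw [show (3:ℝ)/2 = 1 + 1/2 by norm_num, Real.rpow_add ht, Real.rpow_one,
    ← Real.sqrt_eq_rpow]

lemma ig_nonneg (a μ t : ℝ) (ha : 0 ≤ a) (ht : 0 ≤ t) : 0 ≤ ig a μ t := by
  unfold ig
  have h1 : 0 ≤ a / Real.sqrt (2 * Real.pi) * Real.exp (-(a - μ * t) ^ 2 / (2 * t)) :=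
    mul_nonneg (div_nonneg ha sqrt2pi_pos.le) (Real.exp_pos _).le
  have h2 : 0 ≤ t ^ ((3:ℝ)/2) := Real.rpow_nonneg ht _
  exact div_nonneg h1 h2

lemma Gfun_hasDerivAt (a μ : ℝ) {t : ℝ} (ht : 0 < t) :
    HasDerivAt (Gfun a μ) (ig a μ t) t := by
  set s := Real.sqrt t with hs
  have hs0 : 0 < s := Real.sqrt_pos.2 ht
  have hs2 : s ^ 2 = t := Real.sq_sqrt ht.le
  have hsd : HasDerivAt Real.sqrt (1 / (2 * s)) t := Real.hasDerivAt_sqrt ht.ne'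
  have hd1 : HasDerivAt (fun u => μ * Real.sqrt u - a / Real.sqrt u)
      (μ * (1 / (2 * s)) - (0 * s - a * (1 / (2 * s))) / s ^ 2) t :=
    (hsd.const_mul μ).sub ((hasDerivAt_const t a).div hsd hs0.ne')
  have hd2 : HasDerivAt (fun u => -(μ * Real.sqrt u) - a / Real.sqrt u)
      (-(μ * (1 / (2 * s))) - (0 * s - a * (1 / (2 * s))) / s ^ 2) t :=
    ((hsd.const_mul μ).neg).sub ((hasDerivAt_const t a).div hsd hs0.ne')
  have hg1 := (gaussCDF_hasDerivAt (μ * s - a / s)).comp t hd1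
  have hg2 := ((gaussCDF_hasDerivAt (-(μ * s) - a / s)).comp t hd2).const_mul
    (Real.exp (2 * a * μ))
  have hadd := hg1.add hg2
  have e1 : Real.exp (-(μ * s - a / s) ^ 2 / 2) = Real.exp (-(a - μ * t) ^ 2 / (2 * t)) := by
    congr 1
    rw [← hs2]
    field_simp
    ring
  have e2 : Real.exp (2 * a * μ) * Real.exp (-(-(μ * s) - a / s) ^ 2 / 2)
      = Real.exp (-(a - μ * t) ^ 2 / (2 * t)) := by
    rw [← Real.exp_add]
    congr 1
    rw [← hs2]
    field_simp
    ring
  have comb : ∀ D1 D2 : ℝ,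
      gaussPDF (μ * s - a / s) * D1 +
        Real.exp (2 * a * μ) * (gaussPDF (-(μ * s) - a / s) * D2)
      = Real.exp (-(a - μ * t) ^ 2 / (2 * t)) / Real.sqrt (2 * Real.pi) * (D1 + D2) := by
    intro D1 D2
    unfold gaussPDF
    rw [e1, ← e2]
    ring
  have heq : gaussPDF (μ * s - a / s) *
        (μ * (1 / (2 * s)) - (0 * s - a * (1 / (2 * s))) / s ^ 2)
      + Real.exp (2 * a * μ) * (gaussPDF (-(μ * s) - a / s) *
        (-(μ * (1 / (2 * s))) - (0 * s - a * (1 / (2 * s))) / s ^ 2))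
      = ig a μ t := by
    rw [comb]
    unfold ig
    rw [rpow_three_halves ht, ← hs, ← hs2]
    field_simp
    ring
  rw [← heq]
  exact hadd

lemma Gfun_tendsto_zero (a μ : ℝ) (ha : 0 < a) :
    Tendsto (Gfun a μ) (𝓝[>] (0:ℝ)) (𝓝 0) := by
  have hsqrt0 : Tendsto (fun t : ℝ => Real.sqrt t) (𝓝[>] 0) (𝓝 0) := by
    have : Tendsto (fun t : ℝ => Real.sqrt t) (𝓝 0) (𝓝 (Real.sqrt 0)) :=
      Real.continuous_sqrt.continuousAt
    simpa using this.mono_left nhdsWithin_le_nhds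
  have hsqrt : Tendsto (fun t : ℝ => Real.sqrt t) (𝓝[>] 0) (𝓝[>] 0) := by
    rw [tendsto_nhdsWithin_iff]
    refine ⟨hsqrt0, ?_⟩
    filter_upwards [self_mem_nhdsWithin] with t ht
    exact Real.sqrt_pos.2 ht
  have hinv : Tendsto (fun t : ℝ => (Real.sqrt t)⁻¹) (𝓝[>] 0) atTop :=
    tendsto_inv_nhdsGT_zero.comp hsqrt
  have hdiv : Tendsto (fun t : ℝ => a / Real.sqrt t) (𝓝[>] 0) atTop := by
    simp only [div_eq_mul_inv]
    exact hinv.const_mul_atTop ha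
  have hneg : Tendsto (fun t : ℝ => -(a / Real.sqrt t)) (𝓝[>] 0) atBot :=
    tendsto_neg_atTop_atBot.comp hdiv
  have hmu : Tendsto (fun t : ℝ => μ * Real.sqrt t) (𝓝[>] 0) (𝓝 0) := by
    have := hsqrt0.const_mul μ
    simpa using this
  have harg1 : Tendsto (fun t : ℝ => μ * Real.sqrt t - a / Real.sqrt t) (𝓝[>] 0) atBot := by
    have hle : ∀ᶠ t in 𝓝[>] (0:ℝ), μ * Real.sqrt t ≤ 1 :=
      hmu.eventually (eventually_le_nhds one_pos)
    have := tendsto_atBot_add_right_of_ge' _ 1 hneg hle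
    refine this.congr fun t => by ring
  have harg2 : Tendsto (fun t : ℝ => -(μ * Real.sqrt t) - a / Real.sqrt t) (𝓝[>] 0) atBot := by
    have hle : ∀ᶠ t in 𝓝[>] (0:ℝ), -(μ * Real.sqrt t) ≤ 1 := by
      have := hmu.neg.eventually (eventually_le_nhds (show (-0:ℝ) < 1 by norm_num))
      simpa using this
    have := tendsto_atBot_add_right_of_ge' _ 1 hneg hle
    refine this.congr fun t => by ring
  have g1 := gaussCDF_tendsto_atBot.comp harg1
  have g2 := (gaussCDF_tendsto_atBot.comp harg2).const_mul (Real.exp (2 * a * μ))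
  have := g1.add g2
  simp only [Function.comp_def, mul_zero, add_zero] at this
  unfold Gfun
  convert this using 2

lemma ig_key (a μ T : ℝ) (ha : 0 < a) (hT : 0 < T) :
    IntervalIntegrable (ig a μ) volume 0 T ∧
      (∫ t in (0:ℝ)..T, ig a μ t) = Gfun a μ T := by
  set F : ℝ → ℝ := fun t => if t ≤ 0 then 0 else Gfun a μ t with hF
  have hFd : ∀ t ∈ Set.Ioo (0:ℝ) T, HasDerivAt F (ig a μ t) t := by
    intro t htm
    apply (Gfun_hasDerivAt a μ htm.1).congr_of_eventuallyEq
    filter_upwards [lt_mem_nhds htm.1] with y hy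
    simp [hF, not_le.2 hy]
  have hFc : ContinuousOn F (Set.Icc 0 T) := by
    intro x hx
    rcases eq_or_lt_of_le hx.1 with h0 | h0
    · have hsub : Set.Icc (0:ℝ) T ⊆ insert 0 (Set.Ioi 0) := by
        intro y hy
        rcases eq_or_lt_of_le hy.1 with h | h
        · exact Or.inl h.symm
        · exact Or.inr h
      refine ContinuousWithinAt.mono ?_ hsub
      rw [← h0]
      rw [continuousWithinAt_insert_self]
      have hF0 : F 0 = 0 := by simp [hF]
      unfold ContinuousWithinAt
      rw [hF0]
      refine Tendsto.congr' ?_ (Gfun_tendsto_zero a μ ha)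
      filter_upwards [self_mem_nhdsWithin] with y hy
      simp [hF, not_le.2 (Set.mem_Ioi.1 hy)]
    · have hcg : ContinuousAt (Gfun a μ) x := (Gfun_hasDerivAt a μ h0).continuousAt
      have hev : Gfun a μ =ᶠ[nhds x] F := by
        filter_upwards [lt_mem_nhds h0] with y hy
        simp [hF, not_le.2 hy]
      exact (hcg.congr hev).continuousWithinAt
  have hInt : IntervalIntegrable (ig a μ) volume 0 T := by
    apply intervalIntegral.intervalIntegrable_deriv_of_nonneg
    · rwa [Set.uIcc_of_le hT.le]
    · rw [min_eq_left hT.le, max_eq_right hT.le]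
      exact hFd
    · rw [min_eq_left hT.le, max_eq_right hT.le]
      exact fun x hx => ig_nonneg a μ x ha.le hx.1.le
  refine ⟨hInt, ?_⟩
  have := intervalIntegral.integral_eq_sub_of_hasDerivAt_of_le hT.le hFc hFd hInt
  rw [this]
  simp [hF, not_le.2 hT]

end Aux

/-- Closed-form call price for the exponential tempered Lévy-Gauss process
(`α = 1/2`, only negative jumps, tempering `κ`). -/
theorem tempered_levy_gauss_call (ι κ k ι₁ ι₂ v : ℝ)
    (hι : 0 < ι) (hκ : 0 ≤ κ)
    (h1 : ι₁ = Real.sqrt κ * ι) (h2 : ι₂ = Real.sqrt (κ + 1) * ι)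
    (hk : k < ι₂ - ι₁) (hv : v = 2 * ι ^ 2 / (ι₂ - ι₁ - k)) :
    ∫ x in Set.Ioo k (ι₂ - ι₁),
        (Real.exp x - Real.exp k) * Real.exp (ι₁ + κ * (x - (ι₂ - ι₁))) *
          (ι / (2 * Real.sqrt Real.pi)) * Real.exp (-ι ^ 2 / (4 * (ι₂ - ι₁ - x))) /
            (ι₂ - ι₁ - x) ^ ((3 : ℝ) / 2) =
      Real.exp ι₂ * Dsym v (2 * ι₂) - Real.exp (k + ι₁) * Dsym v (2 * ι₁) := by
  set c : ℝ := ι₂ - ι₁ with hc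
  set T : ℝ := c - k with hT
  have hTpos : 0 < T := sub_pos.2 hk
  set a : ℝ := ι / Real.sqrt 2 with ha
  set μ₁' : ℝ := Real.sqrt (2 * κ) with hm1
  set μ₂' : ℝ := Real.sqrt (2 * (κ + 1)) with hm2
  have s2pos : (0:ℝ) < Real.sqrt 2 := Real.sqrt_pos.2 (by norm_num)
  have hapos : 0 < a := div_pos hι s2pos
  have ha2 : a ^ 2 = ι ^ 2 / 2 := by
    rw [ha, div_pow, Real.sq_sqrt (by norm_num : (0:ℝ) ≤ 2)]
  have hμ₁2 : μ₁' ^ 2 = 2 * κ := Real.sq_sqrt (by positivity)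
  have hμ₂2 : μ₂' ^ 2 = 2 * (κ + 1) := Real.sq_sqrt (by positivity)
  have haμ₁ : a * μ₁' = ι₁ := by
    rw [ha, hm1, h1, Real.sqrt_mul (by norm_num : (0:ℝ) ≤ 2) κ]
    field_simp
  have haμ₂ : a * μ₂' = ι₂ := by
    rw [ha, hm2, h2, Real.sqrt_mul (by norm_num : (0:ℝ) ≤ 2) (κ + 1)]
    field_simp
  have hapi : a / Real.sqrt (2 * Real.pi) = ι / (2 * Real.sqrt Real.pi) := by
    rw [ha, Real.sqrt_mul (by norm_num : (0:ℝ) ≤ 2) Real.pi, div_div]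
    congr 1
    rw [← mul_assoc, Real.mul_self_sqrt (by norm_num : (0:ℝ) ≤ 2)]
  clear_value c T a μ₁' μ₂'
  -- Step 1: convert to an interval integral over (0, T) by reflection
  rw [← MeasureTheory.integral_Ioc_eq_integral_Ioo, ← intervalIntegral.integral_of_le hk.le]
  have hcomp := intervalIntegral.integral_comp_sub_left (a := k) (b := c)
    (fun u => (Real.exp (c - u) - Real.exp k) * Real.exp (ι₁ + κ * ((c - u) - c)) *
      (ι / (2 * Real.sqrt Real.pi)) * Real.exp (-ι ^ 2 / (4 * (c - (c - u)))) /
        (c - (c - u)) ^ ((3 : ℝ) / 2)) c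
  simp only [sub_sub_cancel, sub_self] at hcomp
  rw [hcomp, ← hT]
  -- Step 2: pointwise identity with inverse-Gaussian integrands
  have step2 : ∀ u ∈ Set.Ioc (0:ℝ) T,
      (Real.exp (c - u) - Real.exp k) * Real.exp (ι₁ + κ * ((c - u) - c)) *
        (ι / (2 * Real.sqrt Real.pi)) * Real.exp (-ι ^ 2 / (4 * u)) /
          u ^ ((3 : ℝ) / 2)
      = ig a μ₂' u - Real.exp k * ig a μ₁' u := by
    intro u hu
    have hu0 : 0 < u := hu.1
    have hu0' : u ≠ 0 := hu0.ne'
    rw [show ι₁ + κ * ((c - u) - c) = ι₁ - κ * u by ring]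
    have hexp2 : Real.exp (-(a - μ₂' * u) ^ 2 / (2 * u))
        = Real.exp ι₂ * (Real.exp (-((κ + 1) * u)) * Real.exp (-ι ^ 2 / (4 * u))) := by
      rw [← Real.exp_add, ← Real.exp_add]
      congr 1
      have hι2 : ι ^ 2 = 2 * a ^ 2 := by rw [ha2]; ring
      rw [← haμ₂, hι2, show κ + 1 = μ₂' ^ 2 / 2 by rw [hμ₂2]; ring]
      field_simp
      ring
    have hexp1 : Real.exp (-(a - μ₁' * u) ^ 2 / (2 * u))
        = Real.exp ι₁ * (Real.exp (-(κ * u)) * Real.exp (-ι ^ 2 / (4 * u))) := by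
      rw [← Real.exp_add, ← Real.exp_add]
      congr 1
      have hι2 : ι ^ 2 = 2 * a ^ 2 := by rw [ha2]; ring
      rw [← haμ₁, hι2, show κ = μ₁' ^ 2 / 2 by rw [hμ₁2]; ring]
      field_simp
      ring
    have ea : Real.exp (c - u) * Real.exp (ι₁ - κ * u)
        = Real.exp ι₂ * Real.exp (-((κ + 1) * u)) := by
      rw [← Real.exp_add, ← Real.exp_add]
      exact congrArg Real.exp (by rw [hc]; ring)
    have eb : Real.exp (ι₁ - κ * u) = Real.exp ι₁ * Real.exp (-(κ * u)) := by
      rw [← Real.exp_add]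
      exact congrArg Real.exp (by ring)
    unfold ig
    rw [hexp2, hexp1, ← hapi,
      show (Real.exp (c - u) - Real.exp k) * Real.exp (ι₁ - κ * u)
        = Real.exp ι₂ * Real.exp (-((κ + 1) * u))
          - Real.exp k * (Real.exp ι₁ * Real.exp (-(κ * u))) by rw [sub_mul, ea, eb]]
    ring
  have step3 : (∫ u in (0:ℝ)..T,
      (Real.exp (c - u) - Real.exp k) * Real.exp (ι₁ + κ * ((c - u) - c)) *
        (ι / (2 * Real.sqrt Real.pi)) * Real.exp (-ι ^ 2 / (4 * u)) /
          u ^ ((3 : ℝ) / 2))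
      = ∫ u in (0:ℝ)..T, (ig a μ₂' u - Real.exp k * ig a μ₁' u) := by
    apply intervalIntegral.integral_congr_ae
    filter_upwards with u hu
    exact step2 u (by rwa [Set.uIoc_of_le hTpos.le] at hu)
  rw [step3]
  -- Step 3: evaluate the two integrals
  have k2 := ig_key a μ₂' T hapos hTpos
  have k1 := ig_key a μ₁' T hapos hTpos
  rw [intervalIntegral.integral_sub k2.1 (k1.1.const_mul _),
    intervalIntegral.integral_const_mul, k2.2, k1.2]
  -- Step 4: identify with the Dsym expressions
  set s : ℝ := Real.sqrt T with hsT
  have hs0 : 0 < s := Real.sqrt_pos.2 hTpos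
  have hs2 : s ^ 2 = T := Real.sq_sqrt hTpos.le
  clear_value s
  have hvT : v = 4 * a ^ 2 / T := by
    rw [hv, show ι ^ 2 = 2 * a ^ 2 by rw [ha2]; ring]
    ring_nf
  have hsv : Real.sqrt v = 2 * a / s := by
    rw [hvT, show 4 * a ^ 2 / T = (2 * a / s) ^ 2 by rw [← hs2]; ring]
    exact Real.sqrt_sq (le_of_lt (div_pos (by linarith) hs0))
  have hA2 : -((-(2 * ι₂) + v / 2) / Real.sqrt v) = μ₂' * s - a / s := by
    rw [hsv, hvT, ← haμ₂, ← hs2]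
    field_simp
    ring
  have hB2 : (-(2 * ι₂) - v / 2) / Real.sqrt v = -(μ₂' * s) - a / s := by
    rw [hsv, hvT, ← haμ₂, ← hs2]
    field_simp
    ring
  have hA1 : -((-(2 * ι₁) + v / 2) / Real.sqrt v) = μ₁' * s - a / s := by
    rw [hsv, hvT, ← haμ₁, ← hs2]
    field_simp
    ring
  have hB1 : (-(2 * ι₁) - v / 2) / Real.sqrt v = -(μ₁' * s) - a / s := by
    rw [hsv, hvT, ← haμ₁, ← hs2]
    field_simp
    ring
  unfold Gfun Dsym
  rw [← hsT, hA2, hB2, hA1, hB1]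
  rw [show 2 * a * μ₂' = ι₂ + ι₂ by rw [mul_assoc, haμ₂]; ring,
    show 2 * a * μ₁' = ι₁ + ι₁ by rw [mul_assoc, haμ₁]; ring,
    show -(2 * ι₂) / 2 = -ι₂ by ring, show 2 * ι₂ / 2 = ι₂ by ring,
    show -(2 * ι₁) / 2 = -ι₁ by ring, show 2 * ι₁ / 2 = ι₁ by ring]
  simp only [Real.exp_add, Real.exp_neg]
  have he2 : Real.exp ι₂ ≠ 0 := (Real.exp_pos _).ne'
  have he1 : Real.exp ι₁ ≠ 0 := (Real.exp_pos _).ne'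
  field_simp
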